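/- Consider the linear recursion x(k+1) = A x(k) on R^{n₁+n₂} with A = [[A₁₁, B₁],[B̃₁, Ã₁₁]] (A₁₁ of size n₁×n₁), x(k) = (x₁(k), u₁(k)), and an r₁×n₁ matrix C₁ with C_{c,1} = [C₁, 0]. Fix a horizon T ≥ 1 and define the centralized observability matrix O_{c,1} = [ (C_{c,1}A)ᵀ, …, (C_{c,1}A^T)ᵀ ]ᵀ, the local observability matrix O₁ = [ (C₁A₁₁)ᵀ, …, (C₁A₁₁^T)ᵀ ]ᵀ, and the interconnection response matrix F₁^{(u)} whose (k,j) block (1 ≤ j ≤ k ≤ T) equals C₁A₁₁^{k-1-j}B₁ (in the lower block-triangular Toeplitz arrangement with diagonal blocks C₁B₁). Then every vector z satisfying zᵀ[O₁, F₁^{(u)}] = 0 also satisfies zᵀO_{c,1} = 0; i.e., the left null space of [O₁, F₁^{(u)}] is contained in the left null space of O_{c,1}. -/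

import Mathlib

open Matrix

lemma vecMul_sum' {m n ι : Type*} [Fintype m] (s : Finset ι)
    (v : m → ℝ) (M : ι → Matrix m n ℝ) :
    Matrix.vecMul v (∑ i ∈ s, M i) = ∑ i ∈ s, Matrix.vecMul v (M i) := by
  ext j
  simp only [Matrix.vecMul, dotProduct, Finset.sum_apply, Matrix.sum_apply,
    Finset.mul_sum]
  rw [Finset.sum_comm]

lemma sum_vecMul' {m n ι : Type*} [Fintype m] (s : Finset ι)
    (v : ι → m → ℝ) (M : Matrix m n ℝ) :
    ∑ i ∈ s, Matrix.vecMul (v i) M = Matrix.vecMul (∑ i ∈ s, v i) M := by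
  ext j
  simp [Matrix.vecMul, dotProduct, Finset.sum_apply, Finset.sum_mul]
  rw [Finset.sum_comm]

lemma pi1_pow {n₁ n₂ : ℕ} (A₁₁ : Matrix (Fin n₁) (Fin n₁) ℝ) (B₁ : Matrix (Fin n₁) (Fin n₂) ℝ)
    (Bt₁ : Matrix (Fin n₂) (Fin n₁) ℝ) (At₁₁ : Matrix (Fin n₂) (Fin n₂) ℝ) (m : ℕ) :
    Matrix.fromCols (1 : Matrix (Fin n₁) (Fin n₁) ℝ) (0 : Matrix (Fin n₁) (Fin n₂) ℝ) *
        (Matrix.fromBlocks A₁₁ B₁ Bt₁ At₁₁) ^ (m + 1)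
      = A₁₁ ^ (m + 1) * Matrix.fromCols (1 : Matrix (Fin n₁) (Fin n₁) ℝ) (0 : Matrix (Fin n₁) (Fin n₂) ℝ) +
        ∑ j ∈ Finset.range (m + 1),
          A₁₁ ^ (m - j) * B₁ *
            (Matrix.fromCols (0 : Matrix (Fin n₂) (Fin n₁) ℝ) (1 : Matrix (Fin n₂) (Fin n₂) ℝ) *
              (Matrix.fromBlocks A₁₁ B₁ Bt₁ At₁₁) ^ j) := by
  set P : Matrix (Fin n₁) (Fin n₁ ⊕ Fin n₂) ℝ :=
    Matrix.fromCols (1 : Matrix (Fin n₁) (Fin n₁) ℝ) (0 : Matrix (Fin n₁) (Fin n₂) ℝ) with hP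
  set Q : Matrix (Fin n₂) (Fin n₁ ⊕ Fin n₂) ℝ :=
    Matrix.fromCols (0 : Matrix (Fin n₂) (Fin n₁) ℝ) (1 : Matrix (Fin n₂) (Fin n₂) ℝ) with hQ
  set M : Matrix (Fin n₁ ⊕ Fin n₂) (Fin n₁ ⊕ Fin n₂) ℝ :=
    Matrix.fromBlocks A₁₁ B₁ Bt₁ At₁₁ with hM
  have hPM : P * M = A₁₁ * P + B₁ * Q := by
    rw [hP, hQ, hM, Matrix.fromCols_mul_fromBlocks, Matrix.mul_fromCols,
      Matrix.mul_fromCols]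
    simp only [Matrix.one_mul, Matrix.zero_mul, Matrix.mul_one, Matrix.mul_zero,
      add_zero, zero_add]
    ext i (j | j) <;> simp [Matrix.fromCols]
  induction m with
  | zero =>
      simp only [zero_add, pow_one, Finset.sum_range_one, Nat.sub_self, pow_zero,
        Matrix.one_mul, Matrix.mul_one]
      exact hPM
  | succ m ih =>
      have step : P * M ^ (m + 2) = P * M ^ (m + 1) * M := by
        rw [pow_succ, ← Matrix.mul_assoc]
      rw [step, ih, Matrix.add_mul, Matrix.sum_mul]
      have h1 : A₁₁ ^ (m + 1) * P * M
          = A₁₁ ^ (m + 2) * P + A₁₁ ^ (m + 1) * B₁ * (Q * M ^ 0) := by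
        rw [Matrix.mul_assoc, hPM, pow_zero, Matrix.mul_one, Matrix.mul_add,
          ← Matrix.mul_assoc, ← Matrix.mul_assoc, ← pow_succ]
      have h2 : ∀ j, A₁₁ ^ (m - j) * B₁ * (Q * M ^ j) * M
          = A₁₁ ^ (m + 1 - (j + 1)) * B₁ * (Q * M ^ (j + 1)) := by
        intro j
        rw [pow_succ]
        simp [Matrix.mul_assoc, Nat.add_sub_add_right]
      rw [h1]
      rw [Finset.sum_range_succ' (fun j => A₁₁ ^ (m + 1 - j) * B₁ * (Q * M ^ j)) (m + 1)]
      simp only [h2, Nat.sub_zero, Nat.add_sub_cancel]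
      abel

/-- Proposition A.1 of the paper: null space containment. With
`A = [[A₁₁, B₁], [B̃₁, Ã₁₁]]` and `C_{c,1} = [C₁, 0]`, any block vector
`z = (z₁, …, z_T)` in the left null space of `[O₁, F₁^{(u)}]` — i.e. satisfying
`∑_k z_kᵀ C₁ A₁₁^k = 0` (local observability block rows) and, for every block column `j`,
`∑_{k ≥ j} z_kᵀ C₁ A₁₁^{k-j} B₁ = 0` (interconnection response block rows) — is also in
the left null space of the centralized observability matrix `O_{c,1}`, i.e.
`∑_k z_kᵀ C_{c,1} A^k = 0`. -/
theorem left_null_space_containment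
    {n₁ n₂ r₁ T : ℕ}
    (A₁₁ : Matrix (Fin n₁) (Fin n₁) ℝ) (B₁ : Matrix (Fin n₁) (Fin n₂) ℝ)
    (Bt₁ : Matrix (Fin n₂) (Fin n₁) ℝ) (At₁₁ : Matrix (Fin n₂) (Fin n₂) ℝ)
    (C₁ : Matrix (Fin r₁) (Fin n₁) ℝ)
    (A : Matrix (Fin n₁ ⊕ Fin n₂) (Fin n₁ ⊕ Fin n₂) ℝ)
    (hA : A = Matrix.fromBlocks A₁₁ B₁ Bt₁ At₁₁)
    (z : Fin T → Fin r₁ → ℝ)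
    (hO : ∑ k : Fin T, Matrix.vecMul (z k) (C₁ * A₁₁ ^ (k.val + 1)) = 0)
    (hF : ∀ j : Fin T,
      ∑ k : Fin T, (if j ≤ k then
        Matrix.vecMul (z k) (C₁ * A₁₁ ^ (k.val - j.val) * B₁) else 0) = 0) :
    ∑ k : Fin T,
      Matrix.vecMul (z k)
        (Matrix.fromCols C₁ (0 : Matrix (Fin r₁) (Fin n₂) ℝ) * A ^ (k.val + 1)) = 0 := by
  subst hA
  set Afull := Matrix.fromBlocks A₁₁ B₁ Bt₁ At₁₁ with hAfull
  set π₁ : Matrix (Fin n₁) (Fin n₁ ⊕ Fin n₂) ℝ := Matrix.fromCols 1 0 with hπ₁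
  set π₂ : Matrix (Fin n₂) (Fin n₁ ⊕ Fin n₂) ℝ := Matrix.fromCols 0 1 with hπ₂
  have hC : Matrix.fromCols C₁ (0 : Matrix (Fin r₁) (Fin n₂) ℝ) = C₁ * π₁ := by
    simp [hπ₁, Matrix.mul_fromCols]
  -- rewrite each summand using pi1_pow
  have key : ∀ k : Fin T,
      Matrix.vecMul (z k) (Matrix.fromCols C₁ (0 : Matrix (Fin r₁) (Fin n₂) ℝ)
          * Afull ^ (k.val + 1))
        = Matrix.vecMul (Matrix.vecMul (z k) (C₁ * A₁₁ ^ (k.val + 1))) π₁ +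
          ∑ j : Fin T, (if j ≤ k then
            Matrix.vecMul (Matrix.vecMul (z k) (C₁ * A₁₁ ^ (k.val - j.val) * B₁))
              (π₂ * Afull ^ j.val) else 0) := by
    intro k
    rw [hC, Matrix.mul_assoc, pi1_pow A₁₁ B₁ Bt₁ At₁₁ k.val]
    rw [Matrix.mul_add, Matrix.mul_sum]
    rw [Matrix.vecMul_add]
    congr 1
    · rw [← Matrix.mul_assoc, ← Matrix.vecMul_vecMul]
    · -- turn the range sum into a Fin T sum with indicators
      set g : ℕ → Fin n₁ ⊕ Fin n₂ → ℝ := fun a =>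
        Matrix.vecMul (Matrix.vecMul (z k) (C₁ * A₁₁ ^ (k.val - a) * B₁))
          (π₂ * Afull ^ a) with hg
      set F : ℕ → Fin n₁ ⊕ Fin n₂ → ℝ := fun a => if a ≤ k.val then g a else 0 with hgF
      have hsub : Finset.range (k.val + 1) ⊆ Finset.range T := by
        intro x hx
        simp only [Finset.mem_range] at hx ⊢
        omega
      rw [vecMul_sum']
      have e1 : ∑ a ∈ Finset.range (k.val + 1),
          Matrix.vecMul (z k) (C₁ * (A₁₁ ^ (k.val - a) * B₁ * (π₂ * Afull ^ a)))
          = ∑ a ∈ Finset.range (k.val + 1), F a := by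
        apply Finset.sum_congr rfl
        intro a ha
        simp only [Finset.mem_range] at ha
        rw [hgF]
        simp only []
        rw [if_pos (by omega : a ≤ k.val), hg]
        simp only []
        rw [show C₁ * (A₁₁ ^ (k.val - a) * B₁ * (π₂ * Afull ^ a))
            = (C₁ * A₁₁ ^ (k.val - a) * B₁) * (π₂ * Afull ^ a) by
          simp only [Matrix.mul_assoc]]
        rw [← Matrix.vecMul_vecMul]
      rw [e1]
      rw [Finset.sum_subset hsub (by
        intro x _ hx2
        simp only [Finset.mem_range] at hx2
        rw [hgF]
        simp only []
        rw [if_neg (by omega)])]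
      rw [← Fin.sum_univ_eq_sum_range F T]
      apply Finset.sum_congr rfl
      intro j _
      rw [hgF]
      simp only []
      by_cases h : j ≤ k
      · rw [if_pos h, if_pos (by exact_mod_cast h : (j : ℕ) ≤ (k : ℕ))]
      · rw [if_neg h, if_neg (by exact_mod_cast h)]
  rw [Finset.sum_congr rfl (fun k _ => key k)]
  rw [Finset.sum_add_distrib]
  rw [sum_vecMul']
  rw [hO]
  rw [Finset.sum_comm]
  simp only [Matrix.zero_vecMul, zero_add]
  apply Finset.sum_eq_zero
  intro j _
  have : ∑ k : Fin T, (if j ≤ k then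
      Matrix.vecMul (Matrix.vecMul (z k) (C₁ * A₁₁ ^ (k.val - j.val) * B₁))
        (π₂ * Afull ^ j.val) else 0)
      = Matrix.vecMul (∑ k : Fin T, (if j ≤ k then
          Matrix.vecMul (z k) (C₁ * A₁₁ ^ (k.val - j.val) * B₁) else 0)) (π₂ * Afull ^ j.val) := by
    rw [← sum_vecMul']
    apply Finset.sum_congr rfl
    intro k _
    split <;> simp
  rw [this, hF j, Matrix.zero_vecMul]
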